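/- arXiv:1705.03512 — 4 statements merged into one kernel-verified Lean document; each statement's English description precedes it below -/
import Mathlib

section
/- Let U be a unitary on K ⊗ H (K, H Hilbert spaces) and suppose there is a net (ξᵢ) of unit vectors in K such that ‖U(ξᵢ ⊗ v) − ξᵢ ⊗ v‖ → 0 for all v ∈ H. Then any weak-* cluster point m of the net of vector states ω_{ξᵢ,ξᵢ} on B(K) is a state M on B(K) satisfying M((id ⊗ ω_{v,v})(U(T ⊗ 1)U*)) = M(T)·‖v‖² for all T ∈ B(K) and all v ∈ H. -/
open scoped ComplexInnerProductSpace ComplexOrder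

/-- Let `U` be a unitary on `K ⊗ H` admitting a net `(ξᵢ)` of almost
invariant unit vectors in `K`.  Then every weak-* cluster point `M` of the net of
vector states `ω_{ξᵢ,ξᵢ}` on `B(K)` is a state satisfying
`M((id ⊗ ω_{v,v})(U (T ⊗ 1) U*)) = M(T)·‖v‖²` for all `T ∈ B(K)` and `v ∈ H`. -/
theorem cluster_point_of_vector_states_is_invariant_mean {K H T : Type*}
    [NormedAddCommGroup K] [InnerProductSpace ℂ K] [CompleteSpace K]
    [NormedAddCommGroup H] [InnerProductSpace ℂ H] [CompleteSpace H]
    [NormedAddCommGroup T] [InnerProductSpace ℂ T] [CompleteSpace T]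
    (tmul : K →L[ℂ] H →L[ℂ] T)
    (hinner : ∀ x v x' v', ⟪tmul x v, tmul x' v'⟫ = ⟪x, x'⟫ * ⟪v, v'⟫)
    (hdense : Dense ((Submodule.span ℂ
      (Set.range fun p : K × H => tmul p.1 p.2) : Submodule ℂ T) : Set T))
    (U : T →L[ℂ] T) (hU : U ∈ unitary (T →L[ℂ] T))
    -- the amplification `A ↦ A ⊗ 1` and the slice maps `(id ⊗ ω_{v,v})`
    (ampl : (K →L[ℂ] K) → (T →L[ℂ] T))
    (hampl : ∀ A x v, ampl A (tmul x v) = tmul (A x) v)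
    (slc : H → (T →L[ℂ] T) → (K →L[ℂ] K))
    (hslc : ∀ v S ξ η, ⟪η, slc v S ξ⟫ = ⟪tmul η v, S (tmul ξ v)⟫)
    -- a net of almost invariant unit vectors
    {ι : Type*} (l : Filter ι) [l.NeBot] (ξ : ι → K) (hξ : ∀ i, ‖ξ i‖ = 1)
    (hinv : ∀ v : H,
      Filter.Tendsto (fun i => ‖U (tmul (ξ i) v) - tmul (ξ i) v‖) l (nhds 0))
    -- the net of vector states `ω_{ξᵢ,ξᵢ}` in the weak-* topology...
    (ω : ι → WeakDual ℂ (K →L[ℂ] K))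
    (hω : ∀ i (A : K →L[ℂ] K), ω i A = ⟪ξ i, A (ξ i)⟫)
    -- ... and a weak-* cluster point `M` of it
    (M : WeakDual ℂ (K →L[ℂ] K))
    (hM : MapClusterPt M l ω) :
    (M 1 = 1 ∧ ∀ A : K →L[ℂ] K, A.IsPositive → 0 ≤ M A) ∧
    ∀ (A : K →L[ℂ] K) (v : H),
      M (slc v (U ∘L ampl A ∘L star U)) = M A * (‖v‖ : ℂ) ^ 2 := by

  obtain ⟨F, hFl, hFM⟩ := mapClusterPt_iff_ultrafilter.mp hM
  have hev : ∀ A : K →L[ℂ] K,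
      Filter.Tendsto (fun i => (⟪ξ i, A (ξ i)⟫ : ℂ)) F (nhds (M A)) := by
    intro A
    have h1 : Filter.Tendsto (fun i => ω i A) F (nhds (M A)) :=
      ((WeakDual.eval_continuous A).tendsto M).comp hFM
    exact h1.congr fun i => hω i A
  -- isometry of star U
  have hiso : ∀ x : T, ‖(star U) x‖ = ‖x‖ := by
    intro x
    have h1 : ⟪(star U) x, (star U) x⟫ = ⟪x, x⟫ := by
      rw [ContinuousLinearMap.star_eq_adjoint, ContinuousLinearMap.adjoint_inner_left]
      rw [← ContinuousLinearMap.star_eq_adjoint]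
      have : U ((star U) x) = (U * star U) x := rfl
      rw [this, Unitary.mul_star_self_of_mem hU, ContinuousLinearMap.one_apply]
    rw [inner_self_eq_norm_sq_to_K, inner_self_eq_norm_sq_to_K] at h1
    have h3 : ‖(star U) x‖ ^ 2 = ‖x‖ ^ 2 := by exact_mod_cast h1
    have := congrArg Real.sqrt h3
    simpa [Real.sqrt_sq (norm_nonneg _)] using this
  refine ⟨⟨?_, ?_⟩, ?_⟩
  · -- M 1 = 1
    have h1 : Filter.Tendsto (fun i => (⟪ξ i, (1 : K →L[ℂ] K) (ξ i)⟫ : ℂ)) F (nhds (M 1)) :=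
      hev 1
    have h2 : (fun i => (⟪ξ i, (1 : K →L[ℂ] K) (ξ i)⟫ : ℂ)) = fun _ => (1 : ℂ) := by
      funext i
      simp [inner_self_eq_norm_sq_to_K, hξ i]
    rw [h2] at h1
    exact tendsto_nhds_unique h1 tendsto_const_nhds
  · -- positivity
    intro A hA
    have hnn : ∀ i, (0 : ℂ) ≤ ⟪ξ i, A (ξ i)⟫ := by
      intro i
      have hre : 0 ≤ RCLike.re (⟪ξ i, A (ξ i)⟫ : ℂ) := by simpa using (Complex.le_def.mp (hA.inner_nonneg_right (ξ i))).1
      have hsym : (A : K →ₗ[ℂ] K).IsSymmetric :=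
        hA.1
      have him : (starRingEnd ℂ) (⟪ξ i, A (ξ i)⟫ : ℂ) = ⟪ξ i, A (ξ i)⟫ := by
        rw [inner_conj_symm]
        exact hsym (ξ i) (ξ i)
      rw [Complex.le_def]
      constructor
      · simpa using hre
      · simp [(Complex.conj_eq_iff_im.mp him).symm]
    exact ge_of_tendsto (hev A) (Filter.Eventually.of_forall hnn)
  · -- invariance
    intro A v
    set C : T →L[ℂ] T := ampl A with hC
    set B : K →L[ℂ] K := slc v (U ∘L C ∘L star U) with hB
    -- the key pointwise bound
    have key : ∀ i, ‖(⟪ξ i, B (ξ i)⟫ : ℂ) - ⟪ξ i, A (ξ i)⟫ * (‖v‖ : ℂ) ^ 2‖ ≤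
        (2 * ‖C‖ * ‖v‖) * ‖U (tmul (ξ i) v) - tmul (ξ i) v‖ := by
      intro i
      set w : T := tmul (ξ i) v with hw
      set u : T := (star U) w with hu
      have hww : ⟪w, w⟫ = (‖v‖ : ℂ) ^ 2 := by
        rw [hw, hinner, inner_self_eq_norm_sq_to_K, inner_self_eq_norm_sq_to_K, hξ i]
        simp
      have hwnorm : ‖w‖ = ‖v‖ := by
        rw [@norm_eq_sqrt_re_inner ℂ, hww]
        simp [← Complex.ofReal_pow, Real.sqrt_sq (norm_nonneg v)]
      have hunorm : ‖u‖ = ‖v‖ := by rw [hu, hiso, hwnorm]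
      -- rewrite the two inner products
      have e1 : (⟪ξ i, B (ξ i)⟫ : ℂ) = ⟪u, C u⟫ := by
        rw [hB, hslc]
        have : (U ∘L C ∘L star U) (tmul (ξ i) v) = U (C u) := rfl
        rw [this, ← hw]
        rw [hu, ContinuousLinearMap.star_eq_adjoint, ContinuousLinearMap.adjoint_inner_left]
      have e2 : (⟪ξ i, A (ξ i)⟫ : ℂ) * (‖v‖ : ℂ) ^ 2 = ⟪w, C w⟫ := by
        rw [hC, hw, hampl, hinner, inner_self_eq_norm_sq_to_K]
        norm_cast
      rw [e1, e2]
      have e3 : (⟪u, C u⟫ : ℂ) - ⟪w, C w⟫ = ⟪u - w, C u⟫ + ⟪w, C (u - w)⟫ := by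
        rw [inner_sub_left, map_sub, inner_sub_right]
        ring
      rw [e3]
      have hudw : ‖u - w‖ = ‖U w - w‖ := by
        have h4 : u - w = (star U) (w - U w) := by
          have h5 : (star U) (U w) = w := by
            have : (star U) (U w) = (star U * U) w := rfl
            rw [this, Unitary.star_mul_self_of_mem hU, ContinuousLinearMap.one_apply]
          rw [map_sub, h5, hu]
        rw [h4, hiso, norm_sub_rev]
      calc ‖(⟪u - w, C u⟫ : ℂ) + ⟪w, C (u - w)⟫‖
          ≤ ‖(⟪u - w, C u⟫ : ℂ)‖ + ‖(⟪w, C (u - w)⟫ : ℂ)‖ := norm_add_le _ _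
        _ ≤ ‖u - w‖ * ‖C u‖ + ‖w‖ * ‖C (u - w)‖ := by
            gcongr <;> exact norm_inner_le_norm _ _
        _ ≤ ‖u - w‖ * (‖C‖ * ‖u‖) + ‖w‖ * (‖C‖ * ‖u - w‖) := by
            gcongr <;> exact ContinuousLinearMap.le_opNorm _ _
        _ = (2 * ‖C‖ * ‖v‖) * ‖u - w‖ := by rw [hunorm, hwnorm]; ring
        _ = (2 * ‖C‖ * ‖v‖) * ‖U (tmul (ξ i) v) - tmul (ξ i) v‖ := by rw [hudw, hw]
    -- limits
    have h0 : Filter.Tendsto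
        (fun i => (⟪ξ i, B (ξ i)⟫ : ℂ) - ⟪ξ i, A (ξ i)⟫ * (‖v‖ : ℂ) ^ 2) F (nhds 0) := by
      apply squeeze_zero_norm key
      have := ((hinv v).mono_left hFl).const_mul (2 * ‖C‖ * ‖v‖)
      simpa using this
    have h1 : Filter.Tendsto
        (fun i => (⟪ξ i, B (ξ i)⟫ : ℂ) - ⟪ξ i, A (ξ i)⟫ * (‖v‖ : ℂ) ^ 2) F
        (nhds (M B - M A * (‖v‖ : ℂ) ^ 2)) :=
      (hev B).sub ((hev A).mul_const _)
    have := tendsto_nhds_unique h1 h0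
    exact sub_eq_zero.mp this
end

section
/- Let K, H be Hilbert spaces and U a unitary on K ⊗ H. If there exists a net (ξᵢ) of unit vectors in K with ‖U(ξᵢ ⊗ v) − ξᵢ ⊗ v‖ → 0 for every v ∈ H, then also ‖U*(ξᵢ ⊗ v) − ξᵢ ⊗ v‖ → 0 for every v ∈ H. -/
open scoped ComplexInnerProductSpace

/-- If `U` is a unitary on `K ⊗ H` and `(ξᵢ)` is a net of unit vectors of `K`
with `‖U(ξᵢ ⊗ v) − ξᵢ ⊗ v‖ → 0` for every `v ∈ H`, then also
`‖U*(ξᵢ ⊗ v) − ξᵢ ⊗ v‖ → 0` for every `v ∈ H`. -/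
theorem almost_invariant_vectors_for_adjoint {K H T : Type*}
    [NormedAddCommGroup K] [InnerProductSpace ℂ K] [CompleteSpace K]
    [NormedAddCommGroup H] [InnerProductSpace ℂ H] [CompleteSpace H]
    [NormedAddCommGroup T] [InnerProductSpace ℂ T] [CompleteSpace T]
    -- `tmul x v` models the elementary tensor `x ⊗ v` in `K ⊗ H`
    (tmul : K →L[ℂ] H →L[ℂ] T)
    (hinner : ∀ x v x' v', ⟪tmul x v, tmul x' v'⟫ = ⟪x, x'⟫ * ⟪v, v'⟫)
    (hdense : Dense ((Submodule.span ℂ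
      (Set.range fun p : K × H => tmul p.1 p.2) : Submodule ℂ T) : Set T))
    -- a unitary `U` on `K ⊗ H`
    (U : T →L[ℂ] T) (hU : U ∈ unitary (T →L[ℂ] T))
    -- a net of unit vectors in `K`
    {ι : Type*} (l : Filter ι) [l.NeBot] (ξ : ι → K) (hξ : ∀ i, ‖ξ i‖ = 1)
    (hinv : ∀ v : H,
      Filter.Tendsto (fun i => ‖U (tmul (ξ i) v) - tmul (ξ i) v‖) l (nhds 0)) :
    ∀ v : H,
      Filter.Tendsto (fun i => ‖(star U) (tmul (ξ i) v) - tmul (ξ i) v‖) l (nhds 0) := by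
  intro v
  have key : ∀ x : T, ‖(star U) x - x‖ = ‖U x - x‖ := by
    intro x
    have h1 : U ((star U) x - x) = x - U x := by
      have : U ((star U) x) = x := by
        have := Unitary.mul_star_self_of_mem hU
        calc U ((star U) x) = (U * star U) x := rfl
          _ = x := by rw [this]; rfl
      simp [map_sub, this]
    calc ‖(star U) x - x‖ = ‖U ((star U) x - x)‖ :=
          (U.norm_map_of_mem_unitary hU _).symm
      _ = ‖x - U x‖ := by rw [h1]
      _ = ‖U x - x‖ := norm_sub_rev _ _
  simpa only [key] using hinv v
end

section
/- Let K, H be Hilbert spaces and U a unitary on K ⊗ H. If there exists a net of unit vectors (ξᵢ) in K such that ‖U(ξᵢ ⊗ v) − ξᵢ ⊗ v‖ → 0 for all v ∈ H, then there exists a state ψ on B(K) such that ψ((id ⊗ ω_{v,w})(U)) = ⟨v, w⟩ for all v, w ∈ H, where (id ⊗ ω_{v,w})(U) ∈ B(K) is the slice of U. -/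
open scoped ComplexInnerProductSpace

/-- If a unitary `U` on `K ⊗ H` admits a net `(ξᵢ)` of almost invariant unit
vectors in `K`, then there exists a state `ψ` on `B(K)` with
`ψ((id ⊗ ω_{v,w})(U)) = ⟨v, w⟩` for all `v, w ∈ H`.
(Here `⟨v,w⟩` is conjugate-linear in the second variable, i.e. it is `⟪w, v⟫` in
Mathlib's convention, and `(id ⊗ ω_{v,w})(U)` is the slice of `U`, characterised by
`⟨Sξ, η⟩ = ⟨U(ξ ⊗ v), η ⊗ w⟩`.) -/
theorem almost_invariant_gives_state {K H T : Type*}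
    [NormedAddCommGroup K] [InnerProductSpace ℂ K] [CompleteSpace K]
    [NormedAddCommGroup H] [InnerProductSpace ℂ H] [CompleteSpace H]
    [NormedAddCommGroup T] [InnerProductSpace ℂ T] [CompleteSpace T]
    (tmul : K →L[ℂ] H →L[ℂ] T)
    (hinner : ∀ x v x' v', ⟪tmul x v, tmul x' v'⟫ = ⟪x, x'⟫ * ⟪v, v'⟫)
    (hdense : Dense ((Submodule.span ℂ
      (Set.range fun p : K × H => tmul p.1 p.2) : Submodule ℂ T) : Set T))
    (U : T →L[ℂ] T) (hU : U ∈ unitary (T →L[ℂ] T))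
    -- the slice maps `(id ⊗ ω_{v,w})`
    (slc : H → H → (T →L[ℂ] T) → (K →L[ℂ] K))
    (hslc : ∀ v w S ξ η, ⟪η, slc v w S ξ⟫ = ⟪tmul η w, S (tmul ξ v)⟫)
    -- a net of almost invariant unit vectors
    {ι : Type*} (l : Filter ι) [l.NeBot] (ξ : ι → K) (hξ : ∀ i, ‖ξ i‖ = 1)
    (hinv : ∀ v : H,
      Filter.Tendsto (fun i => ‖U (tmul (ξ i) v) - tmul (ξ i) v‖) l (nhds 0)) :
    ∃ ψ : (K →L[ℂ] K) →L[ℂ] ℂ,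
      ψ 1 = 1 ∧ (∀ A : K →L[ℂ] K, A.IsPositive → 0 ≤ (ψ A).re ∧ (ψ A).im = 0) ∧
      ∀ v w : H, ψ (slc v w U) = ⟪w, v⟫ := by
  classical
  obtain ⟨u, hu⟩ := Filter.exists_ultrafilter_le l
  -- the vector states
  set g : (K →L[ℂ] K) → ι → ℂ := fun A i => ⟪ξ i, A (ξ i)⟫ with hg
  have hbound : ∀ A i, ‖g A i‖ ≤ ‖A‖ := by
    intro A i
    calc ‖g A i‖ ≤ ‖ξ i‖ * ‖A (ξ i)‖ := norm_inner_le_norm _ _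
      _ ≤ ‖ξ i‖ * (‖A‖ * ‖ξ i‖) := by
          gcongr; exact A.le_opNorm _
      _ = ‖A‖ := by rw [hξ i]; ring
  have hlim : ∀ A : K →L[ℂ] K, ∃ c, ‖c‖ ≤ ‖A‖ ∧
      Filter.Tendsto (g A) u (nhds c) := by
    intro A
    have hcpt : IsCompact (Metric.closedBall (0 : ℂ) ‖A‖) := isCompact_closedBall _ _
    have hle : (u.map (g A) : Filter ℂ) ≤ Filter.principal (Metric.closedBall 0 ‖A‖) := by
      rw [Filter.le_principal_iff, Ultrafilter.coe_map, Filter.mem_map]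
      exact Filter.univ_mem' fun i => by
        simpa [Metric.mem_closedBall, dist_zero_right] using hbound A i
    obtain ⟨c, hc, hlc⟩ := hcpt.ultrafilter_le_nhds (u.map (g A)) hle
    exact ⟨c, by simpa [Metric.mem_closedBall, dist_zero_right] using hc, hlc⟩
  set f : (K →L[ℂ] K) → ℂ := fun A => (hlim A).choose with hf
  have hft : ∀ A, Filter.Tendsto (g A) u (nhds (f A)) := fun A => (hlim A).choose_spec.2
  have hfb : ∀ A, ‖f A‖ ≤ ‖A‖ := fun A => (hlim A).choose_spec.1
  -- a uniqueness principle
  have huniq : ∀ (A : K →L[ℂ] K) (c : ℂ), Filter.Tendsto (g A) u (nhds c) → f A = c := by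
    intro A c hc
    exact tendsto_nhds_unique (hft A) hc
  -- linearity
  have hadd : ∀ A B, f (A + B) = f A + f B := by
    intro A B
    refine huniq _ _ ?_
    have : g (A + B) = fun i => g A i + g B i := by
      funext i; simp [hg, inner_add_right]
    rw [this]
    exact (hft A).add (hft B)
  have hsmul : ∀ (c : ℂ) (A), f (c • A) = c * f A := by
    intro c A
    refine huniq _ _ ?_
    have : g (c • A) = fun i => c * g A i := by
      funext i; simp [hg, inner_smul_right]
    rw [this]
    exact (hft A).const_mul c
  let ψ₀ : (K →L[ℂ] K) →ₗ[ℂ] ℂ :=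
    { toFun := f, map_add' := hadd, map_smul' := fun c A => hsmul c A }
  let ψ : (K →L[ℂ] K) →L[ℂ] ℂ :=
    ψ₀.mkContinuous 1 (fun A => by rw [one_mul]; exact hfb A)
  have hψ : ∀ A, ψ A = f A := fun A => rfl
  refine ⟨ψ, ?_, ?_, ?_⟩
  · -- ψ 1 = 1
    rw [hψ]
    refine huniq _ _ ?_
    have : g 1 = fun _ => (1 : ℂ) := by
      funext i
      simp only [hg, ContinuousLinearMap.one_apply]
      rw [inner_self_eq_norm_sq_to_K, hξ i]
      norm_num
    rw [this]
    exact tendsto_const_nhds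
  · -- positivity
    intro A hA
    have hreal : ∀ i, ∃ r : ℝ, 0 ≤ r ∧ g A i = (r : ℂ) := by
      intro i
      refine ⟨(g A i).re, ?_, ?_⟩
      · simpa [hg] using (Complex.le_def.mp (hA.inner_nonneg_right (ξ i))).1
      · have hsym := ContinuousLinearMap.isSelfAdjoint_iff_isSymmetric.mp hA.isSelfAdjoint
        have h1 : (starRingEnd ℂ) (g A i) = g A i := by
          simp only [hg]
          rw [inner_conj_symm]
          exact hsym (ξ i) (ξ i)
        exact (Complex.conj_eq_iff_re.mp h1).symm
    constructor
    · rw [hψ]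
      have htre : Filter.Tendsto (fun i => (g A i).re) u (nhds (f A).re) :=
        (Complex.continuous_re.tendsto _).comp (hft A)
      refine le_of_tendsto_of_tendsto' tendsto_const_nhds htre fun i => ?_
      obtain ⟨r, hr, hgi⟩ := hreal i
      rw [hgi]; simpa using hr
    · rw [hψ]
      have htim : Filter.Tendsto (fun i => (g A i).im) u (nhds (f A).im) :=
        (Complex.continuous_im.tendsto _).comp (hft A)
      have : Filter.Tendsto (fun i => (g A i).im) u (nhds 0) := by
        have : (fun i => (g A i).im) = fun _ => (0 : ℝ) := by
          funext i
          obtain ⟨r, hr, hgi⟩ := hreal i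
          rw [hgi]; simp
        rw [this]; exact tendsto_const_nhds
      exact tendsto_nhds_unique htim this
  · -- the key identity
    intro v w
    rw [hψ]
    refine huniq _ _ ?_
    have hdecomp : ∀ i, g (slc v w U) i
        = ⟪w, v⟫ + ⟪tmul (ξ i) w, U (tmul (ξ i) v) - tmul (ξ i) v⟫ := by
      intro i
      have h1 : g (slc v w U) i = ⟪tmul (ξ i) w, U (tmul (ξ i) v)⟫ := hslc v w U (ξ i) (ξ i)
      have h2 : ⟪tmul (ξ i) w, tmul (ξ i) v⟫ = ⟪w, v⟫ := by
        rw [hinner]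
        rw [inner_self_eq_norm_sq_to_K, hξ i]
        norm_num
      rw [h1, ← h2]
      rw [inner_sub_right]
      ring
    have herr : Filter.Tendsto
        (fun i => ⟪tmul (ξ i) w, U (tmul (ξ i) v) - tmul (ξ i) v⟫) u (nhds 0) := by
      have hnw : ∀ i, ‖tmul (ξ i) w‖ = ‖w‖ := by
        intro i
        have : ⟪tmul (ξ i) w, tmul (ξ i) w⟫ = ⟪w, w⟫ := by
          rw [hinner, inner_self_eq_norm_sq_to_K, hξ i]; norm_num
        have h3 : ‖tmul (ξ i) w‖ ^ 2 = ‖w‖ ^ 2 := by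
          rw [← inner_self_eq_norm_sq (𝕜 := ℂ), ← inner_self_eq_norm_sq (𝕜 := ℂ), this]
        calc ‖tmul (ξ i) w‖ = Real.sqrt (‖tmul (ξ i) w‖ ^ 2) :=
              (Real.sqrt_sq (norm_nonneg _)).symm
          _ = Real.sqrt (‖w‖ ^ 2) := by rw [h3]
          _ = ‖w‖ := Real.sqrt_sq (norm_nonneg _)
      have hbnd : ∀ i, ‖⟪tmul (ξ i) w, U (tmul (ξ i) v) - tmul (ξ i) v⟫‖
          ≤ ‖w‖ * ‖U (tmul (ξ i) v) - tmul (ξ i) v‖ := by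
        intro i
        calc ‖⟪tmul (ξ i) w, U (tmul (ξ i) v) - tmul (ξ i) v⟫‖
            ≤ ‖tmul (ξ i) w‖ * ‖U (tmul (ξ i) v) - tmul (ξ i) v‖ := norm_inner_le_norm _ _
          _ = ‖w‖ * ‖U (tmul (ξ i) v) - tmul (ξ i) v‖ := by rw [hnw i]
      have hmajl : Filter.Tendsto
          (fun i => ‖w‖ * ‖U (tmul (ξ i) v) - tmul (ξ i) v‖) l (nhds 0) := by
        have := (hinv v).const_mul ‖w‖
        simpa using this
      have hmaj : Filter.Tendsto
          (fun i => ‖w‖ * ‖U (tmul (ξ i) v) - tmul (ξ i) v‖) u (nhds 0) :=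
        hmajl.mono_left hu
      exact squeeze_zero_norm hbnd hmaj
    have : (fun i => g (slc v w U) i)
        = fun i => ⟪w, v⟫ + ⟪tmul (ξ i) w, U (tmul (ξ i) v) - tmul (ξ i) v⟫ := by
      funext i; exact hdecomp i
    rw [show g (slc v w U) = fun i => g (slc v w U) i from rfl, this]
    simpa using (tendsto_const_nhds (x := ⟪w, v⟫) (f := (u : Filter ι))).add herr
end

section
/- Let K, H be Hilbert spaces, U a unitary on K ⊗ H, and suppose there is a net of unit vectors (ζᵢ) in K ⊗ K̄ such that ‖(U₁₃ Ū₂₃)(ζᵢ ⊗ v) − ζᵢ ⊗ v‖ → 0 for all v ∈ H (i.e., the tensor product of U with a contragredient copy Ū admits almost invariant vectors). Then any weak-* cluster point m of the states ω_{ζᵢ,ζᵢ} on B(K ⊗ K̄) satisfies m((id ⊗ ω_{v,v})((U₁₃Ū₂₃)(T ⊗ 1)(U₁₃Ū₂₃)*)) = ‖v‖² m(T) for all T ∈ B(K ⊗ K̄), v ∈ H. -/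
open scoped ComplexInnerProductSpace ComplexOrder

/-- Let `U` be a unitary on `K ⊗ H` and `Ū` a (contragredient) unitary on
`K̄ ⊗ H`, and suppose the tensor product `W := U₁₃Ū₂₃` on `(K ⊗ K̄) ⊗ H` admits a net
`(ζᵢ)` of almost invariant unit vectors in `K ⊗ K̄`.  Then any weak-* cluster point `m`
of the vector states `ω_{ζᵢ,ζᵢ}` on `B(K ⊗ K̄)` satisfies
`m((id ⊗ ω_{v,v})(W (T ⊗ 1) W*)) = ‖v‖² m(T)` for all `T ∈ B(K ⊗ K̄)`, `v ∈ H`. -/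
theorem cluster_state_is_invariant_for_tensor_with_conjugate {K Kb H TKH TKbH TP T3 : Type*}
    [NormedAddCommGroup K] [InnerProductSpace ℂ K] [CompleteSpace K]
    [NormedAddCommGroup Kb] [InnerProductSpace ℂ Kb] [CompleteSpace Kb]
    [NormedAddCommGroup H] [InnerProductSpace ℂ H] [CompleteSpace H]
    [NormedAddCommGroup TKH] [InnerProductSpace ℂ TKH] [CompleteSpace TKH]
    [NormedAddCommGroup TKbH] [InnerProductSpace ℂ TKbH] [CompleteSpace TKbH]
    [NormedAddCommGroup TP] [InnerProductSpace ℂ TP] [CompleteSpace TP]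
    [NormedAddCommGroup T3] [InnerProductSpace ℂ T3] [CompleteSpace T3]
    -- models of `K ⊗ H`, `K̄ ⊗ H`, `K ⊗ K̄` and `(K ⊗ K̄) ⊗ H`
    (tmulKH : K →L[ℂ] H →L[ℂ] TKH)
    (hinnerKH : ∀ x v x' v', ⟪tmulKH x v, tmulKH x' v'⟫ = ⟪x, x'⟫ * ⟪v, v'⟫)
    (hdenseKH : Dense ((Submodule.span ℂ
      (Set.range fun p : K × H => tmulKH p.1 p.2) : Submodule ℂ TKH) : Set TKH))
    (tmulKbH : Kb →L[ℂ] H →L[ℂ] TKbH)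
    (hinnerKbH : ∀ y v y' v', ⟪tmulKbH y v, tmulKbH y' v'⟫ = ⟪y, y'⟫ * ⟪v, v'⟫)
    (hdenseKbH : Dense ((Submodule.span ℂ
      (Set.range fun p : Kb × H => tmulKbH p.1 p.2) : Submodule ℂ TKbH) : Set TKbH))
    (tmulP : K →L[ℂ] Kb →L[ℂ] TP)
    (hinnerP : ∀ x y x' y', ⟪tmulP x y, tmulP x' y'⟫ = ⟪x, x'⟫ * ⟪y, y'⟫)
    (hdenseP : Dense ((Submodule.span ℂ
      (Set.range fun p : K × Kb => tmulP p.1 p.2) : Submodule ℂ TP) : Set TP))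
    (tmulBig : TP →L[ℂ] H →L[ℂ] T3)
    (hinnerBig : ∀ s v s' v', ⟪tmulBig s v, tmulBig s' v'⟫ = ⟪s, s'⟫ * ⟪v, v'⟫)
    (hdenseBig : Dense ((Submodule.span ℂ
      (Set.range fun p : TP × H => tmulBig p.1 p.2) : Submodule ℂ T3) : Set T3))
    -- `U` and its contragredient `Ub`
    (U : TKH →L[ℂ] TKH) (hU : U ∈ unitary (TKH →L[ℂ] TKH))
    (Ub : TKbH →L[ℂ] TKbH) (hUb : Ub ∈ unitary (TKbH →L[ℂ] TKbH))
    -- the legs `U₁₃`, `Ū₂₃` on `K ⊗ K̄ ⊗ H`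
    (p13 : TKH →L[ℂ] Kb →L[ℂ] T3)
    (hp13 : ∀ x v y, p13 (tmulKH x v) y = tmulBig (tmulP x y) v)
    (p23 : K →L[ℂ] TKbH →L[ℂ] T3)
    (hp23 : ∀ x y v, p23 x (tmulKbH y v) = tmulBig (tmulP x y) v)
    (U13 : T3 →L[ℂ] T3) (hU13 : ∀ t y, U13 (p13 t y) = p13 (U t) y)
    (Ub23 : T3 →L[ℂ] T3) (hUb23 : ∀ x t, Ub23 (p23 x t) = p23 x (Ub t))
    -- amplification `T ↦ T ⊗ 1` and slices `(id ⊗ ω_{v,v})`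
    (ampl : (TP →L[ℂ] TP) → (T3 →L[ℂ] T3))
    (hampl : ∀ S t v, ampl S (tmulBig t v) = tmulBig (S t) v)
    (slc : H → (T3 →L[ℂ] T3) → (TP →L[ℂ] TP))
    (hslc : ∀ v S t s, ⟪s, slc v S t⟫ = ⟪tmulBig s v, S (tmulBig t v)⟫)
    -- a net of almost invariant unit vectors for `W = U₁₃Ū₂₃`
    {ι : Type*} (l : Filter ι) [l.NeBot] (ζ : ι → TP) (hζ : ∀ i, ‖ζ i‖ = 1)
    (hinv : ∀ v : H, Filter.Tendsto
      (fun i => ‖(U13 ∘L Ub23) (tmulBig (ζ i) v) - tmulBig (ζ i) v‖) l (nhds 0))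
    -- a weak-* cluster point `m` of the vector states `ω_{ζᵢ,ζᵢ}`
    (ω : ι → WeakDual ℂ (TP →L[ℂ] TP))
    (hω : ∀ i (S : TP →L[ℂ] TP), ω i S = ⟪ζ i, S (ζ i)⟫)
    (m : WeakDual ℂ (TP →L[ℂ] TP))
    (hm : MapClusterPt m l ω) :
    ∀ (S : TP →L[ℂ] TP) (v : H),
      m (slc v ((U13 ∘L Ub23) ∘L ampl S ∘L star (U13 ∘L Ub23)))
        = (‖v‖ : ℂ) ^ 2 * m S := by

  -- `U` and `Ub` preserve inner products
  have hUinner : ∀ t t' : TKH, ⟪U t, U t'⟫ = ⟪t, t'⟫ := by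
    intro t t'
    rw [← ContinuousLinearMap.adjoint_inner_right, ← ContinuousLinearMap.star_eq_adjoint,
      ← ContinuousLinearMap.comp_apply, ← ContinuousLinearMap.mul_def, hU.1,
      ContinuousLinearMap.one_apply]
  have hUbinner : ∀ t t' : TKbH, ⟪Ub t, Ub t'⟫ = ⟪t, t'⟫ := by
    intro t t'
    rw [← ContinuousLinearMap.adjoint_inner_right, ← ContinuousLinearMap.star_eq_adjoint,
      ← ContinuousLinearMap.comp_apply, ← ContinuousLinearMap.mul_def, hUb.1,
      ContinuousLinearMap.one_apply]
  -- inner product formula for `p13`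
  have step13 : ∀ (y y' : Kb) (x : K) (v : H) (t' : TKH),
      ⟪p13 (tmulKH x v) y, p13 t' y'⟫ = ⟪tmulKH x v, t'⟫ * ⟪y, y'⟫ := by
    intro y y' x v t'
    have h : (innerSL ℂ (p13 (tmulKH x v) y) ∘L p13.flip y')
        = (⟪y, y'⟫ • innerSL ℂ (tmulKH x v)) := by
      apply ContinuousLinearMap.ext_on hdenseKH
      rintro _ ⟨⟨x', v'⟩, rfl⟩
      simp only [ContinuousLinearMap.coe_comp', Function.comp_apply,
        ContinuousLinearMap.flip_apply, innerSL_apply_apply, ContinuousLinearMap.smul_apply,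
        smul_eq_mul]
      rw [hp13, hp13, hinnerBig, hinnerP, hinnerKH]
      ring
    have h2 := congrArg (fun f : TKH →L[ℂ] ℂ => f t') h
    simpa [mul_comm] using h2
  have inner13 : ∀ (t t' : TKH) (y y' : Kb),
      ⟪p13 t y, p13 t' y'⟫ = ⟪t, t'⟫ * ⟪y, y'⟫ := by
    intro t t' y y'
    have h : (innerSL ℂ (p13 t y) ∘L p13.flip y')
        = (⟪y, y'⟫ • innerSL ℂ t) := by
      apply ContinuousLinearMap.ext_on hdenseKH
      rintro _ ⟨⟨x', v'⟩, rfl⟩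
      simp only [ContinuousLinearMap.coe_comp', Function.comp_apply,
        ContinuousLinearMap.flip_apply, innerSL_apply_apply, ContinuousLinearMap.smul_apply,
        smul_eq_mul]
      have h3 := congrArg (starRingEnd ℂ) (step13 y' y x' v' t)
      simp only [map_mul, inner_conj_symm] at h3
      rw [h3]; try ring
    have h2 := congrArg (fun f : TKH →L[ℂ] ℂ => f t') h
    simpa [mul_comm] using h2
  -- inner product formula for `p23`
  have step23 : ∀ (x x' : K) (y : Kb) (v : H) (t' : TKbH),
      ⟪p23 x (tmulKbH y v), p23 x' t'⟫ = ⟪x, x'⟫ * ⟪tmulKbH y v, t'⟫ := by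
    intro x x' y v t'
    have h : (innerSL ℂ (p23 x (tmulKbH y v)) ∘L p23 x')
        = (⟪x, x'⟫ • innerSL ℂ (tmulKbH y v)) := by
      apply ContinuousLinearMap.ext_on hdenseKbH
      rintro _ ⟨⟨y', v'⟩, rfl⟩
      simp only [ContinuousLinearMap.coe_comp', Function.comp_apply,
        innerSL_apply_apply, ContinuousLinearMap.smul_apply, smul_eq_mul]
      rw [hp23, hp23, hinnerBig, hinnerP, hinnerKbH]
      ring
    have h2 := congrArg (fun f : TKbH →L[ℂ] ℂ => f t') h
    simpa [mul_comm] using h2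
  have inner23 : ∀ (x x' : K) (t t' : TKbH),
      ⟪p23 x t, p23 x' t'⟫ = ⟪x, x'⟫ * ⟪t, t'⟫ := by
    intro x x' t t'
    have h : (innerSL ℂ (p23 x t) ∘L p23 x')
        = (⟪x, x'⟫ • innerSL ℂ t) := by
      apply ContinuousLinearMap.ext_on hdenseKbH
      rintro _ ⟨⟨y', v'⟩, rfl⟩
      simp only [ContinuousLinearMap.coe_comp', Function.comp_apply,
        innerSL_apply_apply, ContinuousLinearMap.smul_apply, smul_eq_mul]
      have h3 := congrArg (starRingEnd ℂ) (step23 x' x y' v' t)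
      simp only [map_mul, inner_conj_symm] at h3
      rw [h3]; try ring
    have h2 := congrArg (fun f : TKbH →L[ℂ] ℂ => f t') h
    simpa [mul_comm] using h2
  -- density of the span of doubly-elementary tensors in `T3`
  set S2 : Set T3 := Set.range (fun p : (K × Kb) × H => tmulBig (tmulP p.1.1 p.1.2) p.2)
    with hS2def
  have hdense2 : Dense ((Submodule.span ℂ S2 : Submodule ℂ T3) : Set T3) := by
    rw [Submodule.dense_iff_topologicalClosure_eq_top]
    rw [Submodule.dense_iff_topologicalClosure_eq_top] at hdenseBig
    rw [← top_le_iff, ← hdenseBig]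
    have hMclosed : IsClosed ((Submodule.span ℂ S2).topologicalClosure : Set T3) :=
      (Submodule.span ℂ S2).isClosed_topologicalClosure
    apply Submodule.topologicalClosure_minimal _ _ hMclosed
    rw [Submodule.span_le]
    rintro _ ⟨⟨s, v⟩, rfl⟩
    set N : Submodule ℂ TP :=
      (Submodule.span ℂ S2).topologicalClosure.comap (tmulBig.flip v : TP →ₗ[ℂ] T3) with hN
    have hNclosed : IsClosed (N : Set TP) := by
      have : (N : Set TP) = (tmulBig.flip v) ⁻¹' ((Submodule.span ℂ S2).topologicalClosure : Set T3) := rfl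
      rw [this]
      exact hMclosed.preimage (tmulBig.flip v).continuous
    have hsub : Submodule.span ℂ (Set.range fun p : K × Kb => tmulP p.1 p.2) ≤ N := by
      rw [Submodule.span_le]
      rintro _ ⟨⟨x, y⟩, rfl⟩
      show (tmulBig.flip v) (tmulP x y) ∈ (Submodule.span ℂ S2).topologicalClosure
      refine Submodule.le_topologicalClosure _ (Submodule.subset_span ?_)
      exact ⟨((x, y), v), by simp⟩
    have hs : s ∈ N := by
      have hdN : (N : Set TP) = Set.univ := by
        apply Set.eq_univ_of_univ_subset
        calc Set.univ
            = closure ((Submodule.span ℂ (Set.range fun p : K × Kb => tmulP p.1 p.2) : Submodule ℂ TP) : Set TP) :=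
              (hdenseP.closure_eq).symm
          _ ⊆ closure (N : Set TP) := closure_mono hsub
          _ = (N : Set TP) := hNclosed.closure_eq
      rw [← SetLike.mem_coe, hdN]
      trivial
    have := hs
    rw [hN, Submodule.mem_comap] at this
    exact this
  -- `U13` preserves inner products
  have innerU13 : ∀ ξ η : T3, ⟪U13 ξ, U13 η⟫ = ⟪ξ, η⟫ := by
    have base : ∀ (x : K) (y : Kb) (v : H) (η : T3),
        ⟪U13 (tmulBig (tmulP x y) v), U13 η⟫ = ⟪tmulBig (tmulP x y) v, η⟫ := by
      intro x y v
      have h : (innerSL ℂ (U13 (tmulBig (tmulP x y) v)) ∘L U13)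
          = innerSL ℂ (tmulBig (tmulP x y) v) := by
        apply ContinuousLinearMap.ext_on hdense2
        rintro _ ⟨⟨⟨x', y'⟩, v'⟩, rfl⟩
        simp only [ContinuousLinearMap.coe_comp', Function.comp_apply, innerSL_apply_apply]
        rw [← hp13 x v y, ← hp13 x' v' y', hU13, hU13, inner13, inner13, hUinner]
      intro η
      have h2 := congrArg (fun f : T3 →L[ℂ] ℂ => f η) h
      simpa using h2
    intro ξ η
    have h : (innerSL ℂ (U13 η) ∘L U13) = innerSL ℂ η := by
      apply ContinuousLinearMap.ext_on hdense2
      rintro _ ⟨⟨⟨x', y'⟩, v'⟩, rfl⟩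
      simp only [ContinuousLinearMap.coe_comp', Function.comp_apply, innerSL_apply_apply]
      have h3 := congrArg (starRingEnd ℂ) (base x' y' v' η)
      simpa only [inner_conj_symm] using h3
    have h2 := congrArg (fun f : T3 →L[ℂ] ℂ => f ξ) h
    have h4 : ⟪U13 η, U13 ξ⟫ = ⟪η, ξ⟫ := by simpa using h2
    have h5 := congrArg (starRingEnd ℂ) h4
    simpa only [inner_conj_symm] using h5
  -- `Ub23` preserves inner products
  have innerUb23 : ∀ ξ η : T3, ⟪Ub23 ξ, Ub23 η⟫ = ⟪ξ, η⟫ := by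
    have base : ∀ (x : K) (y : Kb) (v : H) (η : T3),
        ⟪Ub23 (tmulBig (tmulP x y) v), Ub23 η⟫ = ⟪tmulBig (tmulP x y) v, η⟫ := by
      intro x y v
      have h : (innerSL ℂ (Ub23 (tmulBig (tmulP x y) v)) ∘L Ub23)
          = innerSL ℂ (tmulBig (tmulP x y) v) := by
        apply ContinuousLinearMap.ext_on hdense2
        rintro _ ⟨⟨⟨x', y'⟩, v'⟩, rfl⟩
        simp only [ContinuousLinearMap.coe_comp', Function.comp_apply, innerSL_apply_apply]
        rw [← hp23 x y v, ← hp23 x' y' v', hUb23, hUb23, inner23, inner23, hUbinner]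
      intro η
      have h2 := congrArg (fun f : T3 →L[ℂ] ℂ => f η) h
      simpa using h2
    intro ξ η
    have h : (innerSL ℂ (Ub23 η) ∘L Ub23) = innerSL ℂ η := by
      apply ContinuousLinearMap.ext_on hdense2
      rintro _ ⟨⟨⟨x', y'⟩, v'⟩, rfl⟩
      simp only [ContinuousLinearMap.coe_comp', Function.comp_apply, innerSL_apply_apply]
      have h3 := congrArg (starRingEnd ℂ) (base x' y' v' η)
      simpa only [inner_conj_symm] using h3
    have h2 := congrArg (fun f : T3 →L[ℂ] ℂ => f ξ) h
    have h4 : ⟪Ub23 η, Ub23 ξ⟫ = ⟪η, ξ⟫ := by simpa using h2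
    have h5 := congrArg (starRingEnd ℂ) h4
    simpa only [inner_conj_symm] using h5
  intro S v
  set W : T3 →L[ℂ] T3 := U13 ∘L Ub23 with hWdef
  have innerW : ∀ ξ η : T3, ⟪W ξ, W η⟫ = ⟪ξ, η⟫ := by
    intro ξ η
    rw [hWdef]
    simp only [ContinuousLinearMap.comp_apply]
    rw [innerU13, innerUb23]
  have hWadj : ∀ ξ η : T3, ⟪ξ, W η⟫ = ⟪(star W) ξ, η⟫ := by
    intro ξ η
    rw [ContinuousLinearMap.star_eq_adjoint, ContinuousLinearMap.adjoint_inner_left]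
  have hWWs : ∀ ξ : T3, (star W) (W ξ) = ξ := by
    intro ξ
    apply ext_inner_left ℂ
    intro χ
    rw [ContinuousLinearMap.star_eq_adjoint, ContinuousLinearMap.adjoint_inner_right, innerW]
  set A : T3 →L[ℂ] T3 := W ∘L ampl S ∘L star W with hAdef
  set ξ : ι → T3 := fun i => tmulBig (ζ i) v with hξdef
  set η : ι → T3 := fun i => (star W) (ξ i) with hηdef
  have hnum1 : ∀ i, ω i (slc v A) = ⟪η i, ampl S (η i)⟫ := by
    intro i
    rw [hω, hslc]
    have hA : A (tmulBig (ζ i) v) = W (ampl S (η i)) := rfl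
    rw [hA, hWadj]
  have hnum2 : ∀ i, (‖v‖ : ℂ) ^ 2 * ω i S = ⟪ξ i, ampl S (ξ i)⟫ := by
    intro i
    rw [hω]
    show (‖v‖ : ℂ) ^ 2 * ⟪ζ i, S (ζ i)⟫ = ⟪tmulBig (ζ i) v, ampl S (tmulBig (ζ i) v)⟫
    have hvv : ⟪v, v⟫ = (‖v‖ : ℂ) ^ 2 := inner_self_eq_norm_sq_to_K v
    rw [hampl, hinnerBig, hvv]
    ring
  have hξnorm : ∀ i, ‖ξ i‖ = ‖v‖ := by
    intro i
    have hc : (‖ξ i‖ : ℂ) ^ 2 = (‖v‖ : ℂ) ^ 2 := by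
      have h1 : ⟪ξ i, ξ i⟫ = (‖ξ i‖ : ℂ) ^ 2 := inner_self_eq_norm_sq_to_K _
      have h2 : ⟪v, v⟫ = (‖v‖ : ℂ) ^ 2 := inner_self_eq_norm_sq_to_K v
      have h3 : ⟪ζ i, ζ i⟫ = (‖ζ i‖ : ℂ) ^ 2 := inner_self_eq_norm_sq_to_K _
      have h4 : ⟪ξ i, ξ i⟫ = ⟪ζ i, ζ i⟫ * ⟪v, v⟫ := hinnerBig _ _ _ _
      rw [← h1, h4, h3, h2, hζ]
      norm_num
    have hr : ‖ξ i‖ ^ 2 = ‖v‖ ^ 2 := by exact_mod_cast hc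
    calc ‖ξ i‖ = Real.sqrt (‖ξ i‖ ^ 2) := (Real.sqrt_sq (norm_nonneg _)).symm
      _ = Real.sqrt (‖v‖ ^ 2) := by rw [hr]
      _ = ‖v‖ := Real.sqrt_sq (norm_nonneg _)
  have hηnorm : ∀ i, ‖η i‖ ≤ ‖star W‖ * ‖v‖ := by
    intro i
    calc ‖η i‖ ≤ ‖star W‖ * ‖ξ i‖ := (star W).le_opNorm _
      _ = ‖star W‖ * ‖v‖ := by rw [hξnorm]
  have hdiff : ∀ i, ‖η i - ξ i‖ ≤ ‖star W‖ * ‖W (ξ i) - ξ i‖ := by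
    intro i
    have h1 : η i - ξ i = -((star W) (W (ξ i) - ξ i)) := by
      show (star W) (ξ i) - ξ i = -((star W) (W (ξ i) - ξ i))
      rw [map_sub, hWWs]
      abel
    rw [h1, norm_neg]
    exact (star W).le_opNorm _
  -- the scalar net tends to zero
  have htend : Filter.Tendsto
      (fun i => ω i (slc v A) - (‖v‖ : ℂ) ^ 2 * ω i S) l (nhds 0) := by
    have hident : ∀ i, ω i (slc v A) - (‖v‖ : ℂ) ^ 2 * ω i S
        = ⟪η i - ξ i, ampl S (η i)⟫ + ⟪ξ i, ampl S (η i - ξ i)⟫ := by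
      intro i
      rw [hnum1, hnum2, inner_sub_left, map_sub, inner_sub_right]
      ring
    set C : ℝ := ‖star W‖ * (‖ampl S‖ * (‖star W‖ * ‖v‖)) + ‖v‖ * (‖ampl S‖ * ‖star W‖)
      with hC
    apply squeeze_zero_norm (a := fun i => C * ‖W (ξ i) - ξ i‖)
    · intro i
      rw [hident i]
      have hB1 : ‖(ampl S) (η i)‖ ≤ ‖ampl S‖ * (‖star W‖ * ‖v‖) := by
        calc ‖(ampl S) (η i)‖ ≤ ‖ampl S‖ * ‖η i‖ := (ampl S).le_opNorm _
          _ ≤ ‖ampl S‖ * (‖star W‖ * ‖v‖) :=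
            mul_le_mul_of_nonneg_left (hηnorm i) (norm_nonneg _)
      have hB2 : ‖(ampl S) (η i - ξ i)‖ ≤ ‖ampl S‖ * (‖star W‖ * ‖W (ξ i) - ξ i‖) := by
        calc ‖(ampl S) (η i - ξ i)‖ ≤ ‖ampl S‖ * ‖η i - ξ i‖ := (ampl S).le_opNorm _
          _ ≤ ‖ampl S‖ * (‖star W‖ * ‖W (ξ i) - ξ i‖) :=
            mul_le_mul_of_nonneg_left (hdiff i) (norm_nonneg _)
      calc ‖⟪η i - ξ i, (ampl S) (η i)⟫ + ⟪ξ i, (ampl S) (η i - ξ i)⟫‖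
          ≤ ‖⟪η i - ξ i, (ampl S) (η i)⟫‖ + ‖⟪ξ i, (ampl S) (η i - ξ i)⟫‖ := norm_add_le _ _
        _ ≤ ‖η i - ξ i‖ * ‖(ampl S) (η i)‖ + ‖ξ i‖ * ‖(ampl S) (η i - ξ i)‖ :=
            add_le_add (norm_inner_le_norm _ _) (norm_inner_le_norm _ _)
        _ ≤ (‖star W‖ * ‖W (ξ i) - ξ i‖) * (‖ampl S‖ * (‖star W‖ * ‖v‖))
            + ‖v‖ * (‖ampl S‖ * (‖star W‖ * ‖W (ξ i) - ξ i‖)) := by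
            apply add_le_add
            · exact mul_le_mul (hdiff i) hB1 (norm_nonneg _) (by positivity)
            · rw [hξnorm]
              exact mul_le_mul_of_nonneg_left hB2 (norm_nonneg _)
        _ = C * ‖W (ξ i) - ξ i‖ := by rw [hC]; ring
    · have := (hinv v).const_mul C
      simpa using this
  -- evaluate the cluster point
  have hg : Continuous (fun φ : WeakDual ℂ (TP →L[ℂ] TP) =>
      φ (slc v A) - (‖v‖ : ℂ) ^ 2 * φ S) :=
    (WeakDual.eval_continuous (slc v A)).sub (continuous_const.mul (WeakDual.eval_continuous S))
  have hcp : ClusterPt (m (slc v A) - (‖v‖ : ℂ) ^ 2 * m S)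
      (Filter.map (fun i => ω i (slc v A) - (‖v‖ : ℂ) ^ 2 * ω i S) l) := by
    have h1 : ClusterPt m (Filter.map ω l) := hm
    exact h1.map hg.continuousAt (by rw [Filter.Tendsto, Filter.map_map]; exact le_rfl)
  have hcp2 : ClusterPt (m (slc v A) - (‖v‖ : ℂ) ^ 2 * m S) (nhds 0) := hcp.mono htend
  have hz : m (slc v A) - (‖v‖ : ℂ) ^ 2 * m S = 0 := eq_of_nhds_neBot hcp2
  have := sub_eq_zero.mp hz
  exact this
end
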